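/- Fix an integer n ≥ 1 and set N = (n+2 choose 2). Then maxord₀(V_n) = N − 1 for V_n = {x ↦ P(x, e^x) : P ∈ ℂ[x,y], deg P ≤ n}. Explicitly: (i) there exists a nonzero bivariate polynomial P of total degree at most n such that f(x) = P(x, e^x) satisfies f(0) = f′(0) = ⋯ = f^{(N−2)}(0) = 0 and f^{(N−1)}(0) = 1; and (ii) no nonzero function of the form P(x, e^x) with deg P ≤ n vanishes at 0 to order N or higher. -/

import Mathlib

open MvPolynomial

noncomputable def Lop : MvPolynomial (Fin 2) ℂ →ₗ[ℂ] MvPolynomial (Fin 2) ℂ :=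
  (pderiv 0).toLinearMap + (LinearMap.mulLeft ℂ (X 1)) ∘ₗ (pderiv 1).toLinearMap

lemma Lop_apply (p : MvPolynomial (Fin 2) ℂ) :
    Lop p = pderiv 0 p + X 1 * pderiv 1 p := rfl

lemma Lop_mul (p q : MvPolynomial (Fin 2) ℂ) :
    Lop (p * q) = Lop p * q + p * Lop q := by
  simp only [Lop_apply, pderiv_mul]; ring

lemma evalExp_hasDerivAt (P : MvPolynomial (Fin 2) ℂ) (x : ℂ) :
    HasDerivAt (fun x : ℂ => eval ![x, Complex.exp x] P)
      (eval ![x, Complex.exp x] (Lop P)) x := by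
  induction P using MvPolynomial.induction_on with
  | C a => simpa [Lop_apply] using hasDerivAt_const x a
  | add p q hp hq => simpa [map_add] using hp.fun_add hq
  | mul_X p i hp =>
      have hXi : HasDerivAt (fun x : ℂ => eval ![x, Complex.exp x] (X i))
          (eval ![x, Complex.exp x] (Lop (X i))) x := by
        fin_cases i
        · simpa [Lop_apply] using hasDerivAt_id' x
        · simpa [Lop_apply] using Complex.hasDerivAt_exp x
      have h := hp.fun_mul hXi
      simp only [Lop_mul, map_add, map_mul]
      simpa [map_mul] using h

lemma deriv_evalExp (P : MvPolynomial (Fin 2) ℂ) :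
    deriv (fun x : ℂ => eval ![x, Complex.exp x] P)
      = fun x => eval ![x, Complex.exp x] (Lop P) := by
  funext x; exact (evalExp_hasDerivAt P x).deriv

lemma iteratedDeriv_evalExp (P : MvPolynomial (Fin 2) ℂ) (s : ℕ) :
    iteratedDeriv s (fun x : ℂ => eval ![x, Complex.exp x] P)
      = fun x => eval ![x, Complex.exp x] ((Lop ^ s) P) := by
  induction s generalizing P with
  | zero => simp [iteratedDeriv_zero]
  | succ s ih =>
      rw [iteratedDeriv_succ', deriv_evalExp, ih]
      congr 1

lemma finsuppsum (d : Fin 2 →₀ ℕ) : (d.sum fun _ e => e) = d 0 + d 1 := by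
  rw [Finsupp.sum_fintype _ _ (fun _ => rfl), Fin.sum_univ_two]

lemma finsuppsum' (d : Fin 2 →₀ ℕ) : (d.sum fun _ => (id : ℕ → ℕ)) = d 0 + d 1 :=
  finsuppsum d

lemma Lop_totalDegree {P : MvPolynomial (Fin 2) ℂ} {n : ℕ} (h : P.totalDegree ≤ n) :
    (Lop P).totalDegree ≤ n := by
  conv_lhs => rw [← MvPolynomial.support_sum_monomial_coeff P]
  rw [map_sum]
  refine (MvPolynomial.totalDegree_finset_sum _ _).trans (Finset.sup_le fun d hd => ?_)
  have hdn : d 0 + d 1 ≤ n := by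
    have := MvPolynomial.le_totalDegree (p := P) hd
    rw [finsuppsum] at this; omega
  rw [Lop_apply, pderiv_monomial, pderiv_monomial]
  refine (MvPolynomial.totalDegree_add _ _).trans ?_
  refine max_le ((MvPolynomial.totalDegree_monomial_le _ _).trans ?_) ?_
  · rw [finsuppsum']
    simp only [Finsupp.coe_tsub, Pi.sub_apply]
    have h0 : (Finsupp.single (0 : Fin 2) 1) (0 : Fin 2) = 1 := by simp
    have h1 : (Finsupp.single (0 : Fin 2) 1) (1 : Fin 2) = 0 := by simp
    omega
  · by_cases hd1 : d 1 = 0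
    · simp [hd1]
    · calc (X 1 * monomial (d - Finsupp.single 1 1) ((MvPolynomial.coeff d P) * (d 1 : ℂ))).totalDegree
          ≤ (X (1:Fin 2) : MvPolynomial (Fin 2) ℂ).totalDegree + (monomial (d - Finsupp.single 1 1) ((MvPolynomial.coeff d P) * (d 1 : ℂ))).totalDegree := MvPolynomial.totalDegree_mul _ _
        _ ≤ 1 + ((d - Finsupp.single 1 1).sum fun _ e => e) := by
            gcongr
            · exact (MvPolynomial.totalDegree_X _).le
            · exact MvPolynomial.totalDegree_monomial_le _ _
        _ ≤ n := by
            rw [finsuppsum]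
            simp only [Finsupp.coe_tsub, Pi.sub_apply]
            have h0 : (Finsupp.single (1 : Fin 2) 1) (0 : Fin 2) = 0 := by simp
            have h1 : (Finsupp.single (1 : Fin 2) 1) (1 : Fin 2) = 1 := by simp
            omega

lemma vanish_forever {V : Type*} [AddCommGroup V] [Module ℂ V] [FiniteDimensional ℂ V]
    (ψ : V →ₗ[ℂ] V) (φ : V →ₗ[ℂ] ℂ) (v : V)
    (h : ∀ s < Module.finrank ℂ V, φ ((ψ ^ s) v) = 0) : ∀ s, φ ((ψ ^ s) v) = 0 := by
  set N := Module.finrank ℂ V with hN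
  have hCH := LinearMap.aeval_self_charpoly ψ
  have hdeg : ψ.charpoly.natDegree = N := LinearMap.charpoly_natDegree ψ
  have hmon : ψ.charpoly.Monic := LinearMap.charpoly_monic ψ
  intro s
  induction s using Nat.strong_induction_on with
  | _ s ih =>
    rcases lt_or_ge s N with hs | hs
    · exact h s hs
    · obtain ⟨k, rfl⟩ : ∃ k, s = N + k := ⟨s - N, by omega⟩
      have hsum := Polynomial.aeval_eq_sum_range (p := ψ.charpoly) ψ
      rw [hCH] at hsum
      have happ := congrArg (fun (T : V →ₗ[ℂ] V) => φ (T ((ψ ^ k) v))) hsum.symm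
      simp only [LinearMap.zero_apply, map_zero, LinearMap.sum_apply, LinearMap.smul_apply,
        map_sum, map_smul] at happ
      rw [hdeg, Finset.sum_range_succ] at happ
      have hpow : ∀ i : ℕ, (ψ ^ i) ((ψ ^ k) v) = (ψ ^ (i + k)) v := by
        intro i; rw [← Module.End.mul_apply, ← pow_add]
      simp only [hpow] at happ
      have hc : ψ.charpoly.coeff N = 1 := by rw [← hdeg]; exact hmon.coeff_natDegree
      rw [hc, one_smul] at happ
      have hz : ∑ x ∈ Finset.range N, ψ.charpoly.coeff x • φ ((ψ ^ (x + k)) v) = 0 :=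
        Finset.sum_eq_zero fun x hx => by
          rw [ih (x + k) (by have := Finset.mem_range.mp hx; omega), smul_zero]
      rw [hz, zero_add] at happ
      exact happ

noncomputable def degEquiv (n : ℕ) :
    {d : Fin 2 →₀ ℕ // d ∈ {m : Fin 2 →₀ ℕ | (m.sum fun _ e => e) ≤ n}} ≃
      (Σ i : Fin (n + 1), Fin (n + 1 - i.1)) where
  toFun d := ⟨⟨d.1 0, by have := d.2; rw [Set.mem_setOf_eq, finsuppsum] at this; omega⟩,
              ⟨d.1 1, by
                show d.1 1 < n + 1 - d.1 0
                have := d.2; rw [Set.mem_setOf_eq, finsuppsum] at this; omega⟩⟩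
  invFun x := ⟨Finsupp.equivFunOnFinite.symm ![x.1.1, x.2.1], by
    rw [Set.mem_setOf_eq, finsuppsum]
    have h1 := x.1.2
    have h2 := x.2.2
    simp only [Finsupp.coe_equivFunOnFinite_symm, Matrix.cons_val_zero,
      Matrix.cons_val_one, Matrix.head_cons]
    omega⟩
  left_inv d := by
    ext i
    simp only [Finsupp.coe_equivFunOnFinite_symm]
    fin_cases i <;> simp
  right_inv x := by
    ext <;> simp [Finsupp.coe_equivFunOnFinite_symm]

lemma card_deg (n : ℕ) :
    Fintype.card (Σ i : Fin (n + 1), Fin (n + 1 - i.1)) = (n + 2).choose 2 := by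
  rw [Fintype.card_sigma]
  simp only [Fintype.card_fin]
  rw [Fin.sum_univ_eq_sum_range (fun i => n + 1 - i) (n + 1)]
  have h1 : ∑ i ∈ Finset.range (n + 1), (n + 1 - i) = ∑ i ∈ Finset.range (n + 1), (i + 1) := by
    have := Finset.sum_range_reflect (fun j => j + 1) (n + 1)
    rw [← this]
    apply Finset.sum_congr rfl
    intro i hi
    have := Finset.mem_range.mp hi
    omega
  rw [h1]
  have h2 : ∑ i ∈ Finset.range (n + 1), (i + 1) = ∑ i ∈ Finset.range (n + 2), i := by
    rw [Finset.sum_range_succ' (fun i => i) (n + 1)]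
    simp
  rw [h2]
  have h3 := Finset.sum_range_id_mul_two (n + 2)
  rw [Nat.choose_two_right]
  omega

noncomputable instance degFintype (n : ℕ) :
    Fintype {d : Fin 2 →₀ ℕ // d ∈ {m : Fin 2 →₀ ℕ | (m.sum fun _ e => e) ≤ n}} :=
  Fintype.ofEquiv _ (degEquiv n).symm

lemma finrank_W (n : ℕ) :
    Module.finrank ℂ (restrictTotalDegree (Fin 2) ℂ n) = (n + 2).choose 2 := by
  show Module.finrank ℂ (restrictSupport ℂ {m : Fin 2 →₀ ℕ | (m.sum fun _ e => e) ≤ n}) = _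
  rw [Module.finrank_eq_card_basis (basisRestrictSupport ℂ _)]
  rw [← card_deg n]
  exact Fintype.card_congr (degEquiv n)

lemma entire_zero {f : ℂ → ℂ} (hf : Differentiable ℂ f)
    (h : ∀ s : ℕ, iteratedDeriv s f 0 = 0) : f = 0 := by
  funext z
  have hb := hf.hasFPowerSeriesOnBall 0 (R := 1) one_pos
  have hz : z ∈ Metric.eball (0 : ℂ) ⊤ := by simp
  have hs := hb.hasSum_iteratedFDeriv hz
  simp only [zero_add] at hs
  have hzero : (fun s : ℕ => ((s.factorial : ℂ))⁻¹ • (iteratedFDeriv ℂ s f 0) fun _ => z) = fun _ => (0 : ℂ) := by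
    funext s
    rw [iteratedFDeriv_apply_eq_iteratedDeriv_mul_prod, h s, smul_zero, smul_zero]
  rw [hzero] at hs
  simpa using hs.unique hasSum_zero

lemma eval_via_poly (P : MvPolynomial (Fin 2) ℂ) (g : Fin 2 → Polynomial ℂ) (x : ℂ) :
    Polynomial.eval x (MvPolynomial.aeval g P) = eval (fun i => Polynomial.eval x (g i)) P := by
  have h : (Polynomial.aeval x).comp (MvPolynomial.aeval g)
      = MvPolynomial.aeval (R := ℂ) (fun i => Polynomial.eval x (g i)) := by
    apply MvPolynomial.algHom_ext
    intro i
    simp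
  have h2 := congrArg (fun (F : MvPolynomial (Fin 2) ℂ →ₐ[ℂ] ℂ) => F P) h
  simp only [AlgHom.comp_apply] at h2
  rw [← Polynomial.coe_aeval_eq_eval, ← MvPolynomial.coe_aeval_eq_eval]
  exact_mod_cast h2

lemma exp_roots (a : ℂ) (k : ℕ) :
    Complex.exp (a + k * (2 * Real.pi * Complex.I)) = Complex.exp a := by
  rw [Complex.exp_add]
  have : ((k : ℂ)) * (2 * Real.pi * Complex.I) = ((k : ℤ) : ℂ) * (2 * Real.pi * Complex.I) := by
    push_cast; ring
  rw [this, Complex.exp_int_mul_two_pi_mul_I, mul_one]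

lemma poly_zero_of_eval_exp_zero {P : MvPolynomial (Fin 2) ℂ}
    (h : ∀ x : ℂ, eval ![x, Complex.exp x] P = 0) : P = 0 := by
  have key : ∀ (g : Fin 2 → Polynomial ℂ) (S : Set ℂ), S.Infinite →
      (∀ x ∈ S, eval (fun i => Polynomial.eval x (g i)) P = 0) →
      ∀ x : ℂ, eval (fun i => Polynomial.eval x (g i)) P = 0 := by
    intro g S hS hzero x
    have hq0 : MvPolynomial.aeval g P = 0 := by
      apply Polynomial.eq_zero_of_infinite_isRoot
      apply hS.mono
      intro y hy
      simp only [Set.mem_setOf_eq, Polynomial.IsRoot, eval_via_poly]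
      exact hzero y hy
    rw [← eval_via_poly, hq0, Polynomial.eval_zero]
  have step1 : ∀ y : ℂ, y ≠ 0 → ∀ x : ℂ, eval ![x, y] P = 0 := by
    intro y hy
    obtain ⟨a, ha⟩ : ∃ a : ℂ, Complex.exp a = y := by
      have : y ∈ Set.range Complex.exp := by rw [Complex.range_exp]; exact hy
      exact this
    have hfun : ∀ x : ℂ, (fun i => Polynomial.eval x (![Polynomial.X, Polynomial.C y] i)) = ![x, y] := by
      intro x; funext i; fin_cases i <;> simp
    have := key ![Polynomial.X, Polynomial.C y]
      (Set.range fun k : ℕ => a + k * (2 * Real.pi * Complex.I))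
      (Set.infinite_range_of_injective ?_) ?_
    · intro x; rw [← hfun x]; exact this x
    · intro k1 k2 hk
      simp only at hk
      have h2 : (2 * (Real.pi:ℂ) * Complex.I) ≠ 0 := by
        simp [Real.pi_ne_zero, Complex.I_ne_zero]
      have hk' : (k1 : ℂ) * (2 * Real.pi * Complex.I) = (k2 : ℂ) * (2 * Real.pi * Complex.I) :=
        add_left_cancel hk
      have : (k1 : ℂ) = k2 := mul_right_cancel₀ (by exact_mod_cast h2) hk'
      exact_mod_cast this
    · rintro x ⟨k, rfl⟩
      rw [hfun]
      have he : Complex.exp (a + k * (2 * Real.pi * Complex.I)) = y := by rw [exp_roots, ha]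
      rw [← he]
      exact h _
  have step2 : ∀ v : Fin 2 → ℂ, eval v P = 0 := by
    intro v
    have hfun : ∀ x : ℂ, (fun i => Polynomial.eval x (![Polynomial.C (v 0), Polynomial.X] i)) = ![v 0, x] := by
      intro x; funext i; fin_cases i <;> simp
    have h2 := key ![Polynomial.C (v 0), Polynomial.X] {y : ℂ | y ≠ 0}
      ?_ ?_ (v 1)
    · rw [hfun] at h2
      have : ![v 0, v 1] = v := by funext i; fin_cases i <;> rfl
      rwa [this] at h2
    · have : ({y : ℂ | y ≠ 0}) = {(0:ℂ)}ᶜ := rfl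
      rw [this]
      exact Set.Finite.infinite_compl (Set.finite_singleton 0)
    · intro y hy
      rw [hfun]
      exact step1 y hy (v 0)
  exact MvPolynomial.funext fun v => by rw [step2 v, map_zero]
lemma aeval_pt (v : Fin 2 → ℂ) (P : MvPolynomial (Fin 2) ℂ) :
    MvPolynomial.aeval v P = eval v P := by
  rw [MvPolynomial.aeval_def, MvPolynomial.eval, MvPolynomial.coe_eval₂Hom, Algebra.algebraMap_self]

noncomputable def evalF : MvPolynomial (Fin 2) ℂ →ₗ[ℂ] ℂ :=
  (MvPolynomial.aeval (R := ℂ) ![0, 1]).toLinearMap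

lemma evalF_apply (P : MvPolynomial (Fin 2) ℂ) : evalF P = eval ![0, 1] P := aeval_pt _ _

lemma key_deriv (P : MvPolynomial (Fin 2) ℂ) (s : ℕ) :
    iteratedDeriv s (fun x : ℂ => eval ![x, Complex.exp x] P) 0
      = eval ![0, 1] ((Lop ^ s) P) := by
  rw [iteratedDeriv_evalExp]
  norm_num [Complex.exp_zero]
/-- (Lemma 2.8.) With `N = (n+2 choose 2)`, the maximal order of
vanishing at `0` among the functions `V_n = {x ↦ P(x, eˣ) : deg P ≤ n}` is exactly
`N - 1`: (i) there is a nonzero `P` of total degree at most `n` with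
`f = P(·, e^·)` satisfying `f(0) = ⋯ = f^{(N-2)}(0) = 0` and `f^{(N-1)}(0) = 1`;
(ii) no nonzero function of this form vanishes at `0` to order `N` or higher. -/
theorem maxord_exponential_polynomials (n : ℕ) (hn : 1 ≤ n) :
    (∃ P : MvPolynomial (Fin 2) ℂ, P ≠ 0 ∧ P.totalDegree ≤ n ∧
      (∀ s : ℕ, s ≤ (n + 2).choose 2 - 2 →
        iteratedDeriv s (fun x : ℂ => MvPolynomial.eval ![x, Complex.exp x] P) 0 = 0) ∧
      iteratedDeriv ((n + 2).choose 2 - 1)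
        (fun x : ℂ => MvPolynomial.eval ![x, Complex.exp x] P) 0 = 1) ∧
    (∀ P : MvPolynomial (Fin 2) ℂ, P.totalDegree ≤ n →
      (fun x : ℂ => MvPolynomial.eval ![x, Complex.exp x] P) ≠ 0 →
      ∃ s : ℕ, s < (n + 2).choose 2 ∧
        iteratedDeriv s (fun x : ℂ => MvPolynomial.eval ![x, Complex.exp x] P) 0 ≠ 0) := by
  set N := (n + 2).choose 2 with hNdef
  have hN3 : 3 ≤ N := by
    have h1 : (1 + 2).choose 2 ≤ (n + 2).choose 2 :=
      Nat.choose_le_choose 2 (by omega)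
    simpa using h1
  set W := restrictTotalDegree (Fin 2) ℂ n with hWdef
  have hWmem : ∀ p ∈ W, Lop p ∈ W := fun p hp =>
    (mem_restrictTotalDegree _ _ _).2 (Lop_totalDegree ((mem_restrictTotalDegree _ _ _).1 hp))
  set ψ : W →ₗ[ℂ] W := Lop.restrict hWmem with hψdef
  set φ : W →ₗ[ℂ] ℂ := evalF ∘ₗ W.subtype with hφdef
  have hcoe : ∀ (s : ℕ) (x : W), (((ψ ^ s) x : W) : MvPolynomial (Fin 2) ℂ)
      = (Lop ^ s) (x : MvPolynomial (Fin 2) ℂ) := by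
    intro s
    induction s with
    | zero => intro x; simp
    | succ s ih =>
        intro x
        rw [pow_succ, pow_succ, Module.End.mul_apply, Module.End.mul_apply,
          ih (ψ x), hψdef, LinearMap.restrict_coe_apply]
  have hfinrank : Module.finrank ℂ W = N := finrank_W n
  -- the key identification of derivatives
  have hkey : ∀ (x : W) (s : ℕ),
      iteratedDeriv s (fun z : ℂ => MvPolynomial.eval ![z, Complex.exp z] (x : MvPolynomial (Fin 2) ℂ)) 0
        = φ ((ψ ^ s) x) := by
    intro x s
    rw [key_deriv, hφdef]
    simp only [LinearMap.coe_comp, Function.comp_apply, Submodule.coe_subtype]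
    rw [evalF_apply, hcoe]
  -- shared "all derivatives vanish ⇒ zero function"
  have hvanish : ∀ x : W, (∀ s < N, φ ((ψ ^ s) x) = 0) →
      (fun z : ℂ => MvPolynomial.eval ![z, Complex.exp z] (x : MvPolynomial (Fin 2) ℂ)) = 0 := by
    intro x hx
    have hall : ∀ s, φ ((ψ ^ s) x) = 0 :=
      vanish_forever ψ φ x (by rw [hfinrank]; exact hx)
    apply entire_zero
    · exact fun z => (evalExp_hasDerivAt _ z).differentiableAt
    · intro s
      rw [hkey x s]
      exact hall s
  constructor
  · -- part (i)
    set T : W →ₗ[ℂ] (Fin N → ℂ) := LinearMap.pi (fun s : Fin N => φ ∘ₗ (ψ ^ (s : ℕ))) with hTdef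
    have hTinj : Function.Injective T := by
      rw [← LinearMap.ker_eq_bot, LinearMap.ker_eq_bot']
      intro x hx
      have hx' : ∀ s < N, φ ((ψ ^ s) x) = 0 := by
        intro s hs
        have := congrFun hx ⟨s, hs⟩
        simpa [hTdef] using this
      have hzero := hvanish x hx'
      have hxv : (x : MvPolynomial (Fin 2) ℂ) = 0 :=
        poly_zero_of_eval_exp_zero (fun z => congrFun hzero z)
      exact Subtype.ext hxv
    have hTsurj : Function.Surjective T := by
      have heq : Module.finrank ℂ W = Module.finrank ℂ (Fin N → ℂ) := by
        rw [hfinrank, Module.finrank_fintype_fun_eq_card, Fintype.card_fin]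
      exact (LinearMap.injective_iff_surjective_of_finrank_eq_finrank heq).1 hTinj
    obtain ⟨Q, hQ⟩ := hTsurj (Pi.single (⟨N - 1, by omega⟩ : Fin N) 1)
    have hQval : ∀ s : ℕ, (hs : s < N) → φ ((ψ ^ s) Q)
        = (Pi.single (⟨N - 1, by omega⟩ : Fin N) (1:ℂ) : Fin N → ℂ) ⟨s, hs⟩ := by
      intro s hs
      have := congrFun hQ ⟨s, hs⟩
      simpa [hTdef] using this
    refine ⟨(Q : MvPolynomial (Fin 2) ℂ), ?_, (mem_restrictTotalDegree _ _ _).1 Q.2, ?_, ?_⟩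
    · intro h0
      have hQ0 : Q = 0 := Subtype.ext h0
      have := hQval (N - 1) (by omega)
      rw [hQ0] at this
      simp only [map_zero] at this
      rw [Pi.single_eq_same] at this
      exact one_ne_zero this.symm
    · intro s hs
      rw [hkey Q s, hQval s (by omega)]
      rw [Pi.single_apply]
      rw [if_neg]
      intro hcontra
      have : s = N - 1 := by simpa using congrArg Fin.val hcontra
      omega
    · rw [hkey Q (N - 1), hQval (N - 1) (by omega), Pi.single_eq_same]
  · -- part (ii)
    intro P hdeg hfne
    by_contra hcon
    push_neg at hcon
    set x : W := ⟨P, (mem_restrictTotalDegree _ _ _).2 hdeg⟩ with hxdef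
    have hx' : ∀ s < N, φ ((ψ ^ s) x) = 0 := by
      intro s hs
      rw [← hkey x s]
      exact hcon s hs
    exact hfne (hvanish x hx')
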